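/- Let x_J ≥ 0 be indexed by nonempty subsets J of K = {1,…,m}, set s_J = Σ_{I ⊆ J, I ≠ ∅} x_I, and for real r ≥ m−1 define f(x) = Σ_{j=1}^m (−1)^{m−j} Σ_{|J|=j} s_J^r. Then f(x) ≥ 0 for all such x. -/

import Mathlib

open Finset

/-- Sum over the powerset of a disjoint union factors as a double sum. -/
private lemma sum_powerset_union_aux {m : ℕ} (U : Finset (Fin m)) :
    ∀ (J : Finset (Fin m)), Disjoint U J → ∀ (w : Finset (Fin m) → ℝ),
      ∑ I ∈ (U ∪ J).powerset, w I = ∑ V ∈ U.powerset, ∑ I ∈ J.powerset, w (V ∪ I) := by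
  intro J
  induction J using Finset.induction_on with
  | empty => intro _ w; simp
  | @insert b J hb ih =>
    intro hdisj w
    have hbU : b ∉ U := by
      intro hbU
      exact (Finset.disjoint_left.mp hdisj hbU) (mem_insert_self b J)
    have hdisj' : Disjoint U J := hdisj.mono_right (subset_insert b J)
    have hbUJ : b ∉ U ∪ J := by simp [hbU, hb]
    rw [Finset.union_insert, Finset.sum_powerset_insert hbUJ, ih hdisj' w,
      ih hdisj' (fun I => w (insert b I))]
    rw [← Finset.sum_add_distrib]
    refine Finset.sum_congr rfl fun V _ => ?_
    rw [Finset.sum_powerset_insert hb]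
    congr 1
    refine Finset.sum_congr rfl fun I _ => ?_
    rw [Finset.union_insert]

private lemma sum_powerset_eq_empty_add {m : ℕ} (T : Finset (Fin m)) (g : Finset (Fin m) → ℝ) :
    ∑ I ∈ T.powerset, g I = g ∅ + ∑ I ∈ T.powerset.filter Finset.Nonempty, g I := by
  have h : T.powerset.filter (fun I => ¬ I.Nonempty) = {∅} := by
    ext I
    simp only [mem_filter, mem_powerset, Finset.not_nonempty_iff_eq_empty, mem_singleton]
    exact ⟨fun h => h.2, fun h => ⟨by simp [h], h⟩⟩
  rw [← Finset.sum_filter_add_sum_filter_not T.powerset Finset.Nonempty g, h,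
    Finset.sum_singleton, add_comm]

/-- Splitting of the nonempty-subset sum over a disjoint union. -/
private lemma split_lemma {m : ℕ} (U J : Finset (Fin m)) (h : Disjoint U J)
    (w : Finset (Fin m) → ℝ) :
    ∑ I ∈ (U ∪ J).powerset.filter Finset.Nonempty, w I
      = (∑ I ∈ U.powerset.filter Finset.Nonempty, w I)
        + ∑ I ∈ J.powerset.filter Finset.Nonempty, ∑ V ∈ U.powerset, w (V ∪ I) := by
  have hfull := sum_powerset_union_aux U J h w
  rw [sum_powerset_eq_empty_add (U ∪ J) w] at hfull
  have hR : ∀ V : Finset (Fin m),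
      ∑ I ∈ J.powerset, w (V ∪ I)
        = w V + ∑ I ∈ J.powerset.filter Finset.Nonempty, w (V ∪ I) := by
    intro V
    rw [sum_powerset_eq_empty_add J (fun I => w (V ∪ I))]
    simp
  rw [Finset.sum_congr rfl (fun V _ => hR V), Finset.sum_add_distrib,
    sum_powerset_eq_empty_add U w] at hfull
  have hcomm : ∑ V ∈ U.powerset, ∑ I ∈ J.powerset.filter Finset.Nonempty, w (V ∪ I)
      = ∑ I ∈ J.powerset.filter Finset.Nonempty, ∑ V ∈ U.powerset, w (V ∪ I) :=
    Finset.sum_comm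
  linarith [hfull, hcomm]

private lemma key {m : ℕ} : ∀ (n : ℕ) (S : Finset (Fin m)), S.card = n →
    ∀ (c : ℝ), 0 ≤ c → ∀ (x : Finset (Fin m) → ℝ), (∀ I, I.Nonempty → 0 ≤ x I) →
    ∀ (r : ℝ), (n : ℝ) - 1 ≤ r →
    0 ≤ ∑ J ∈ S.powerset, (-1 : ℝ) ^ (n - J.card) *
        (c + ∑ I ∈ J.powerset.filter Finset.Nonempty, x I) ^ r := by
  intro n
  induction n using Nat.strong_induction_on with
  | _ n IH =>
  intro S hS c hc x hx r hr
  rcases Nat.eq_zero_or_pos n with hn0 | hn1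
  · subst hn0
    rw [Finset.card_eq_zero.mp hS]
    simpa [Finset.powerset_empty, Finset.filter_singleton] using Real.rpow_nonneg hc r
  have hSne : S.Nonempty := Finset.card_pos.mp (hS ▸ hn1)
  obtain ⟨a, haS⟩ := hSne
  by_cases hr1 : (1 : ℝ) ≤ r
  swap
  · -- then n = 1 and 0 ≤ r
    have hn : n = 1 := by
      have h2 : (n : ℝ) < 2 := by linarith [not_le.mp hr1]
      have : n < 2 := by exact_mod_cast h2
      omega
    subst hn
    have hr0 : (0 : ℝ) ≤ r := by simpa using hr
    obtain ⟨b, hb⟩ := Finset.card_eq_one.mp hS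
    subst hb
    have hab : a = b := by simpa using haS
    subst hab
    have hps : ({a} : Finset (Fin m)).powerset = {∅, {a}} := by
      ext I; simp [Finset.mem_powerset, Finset.subset_singleton_iff]
    rw [hps, Finset.sum_insert (by exact fun h => (Finset.singleton_ne_empty a) ((Finset.mem_singleton.mp h).symm))]
    have h1 : (∅ : Finset (Fin m)).powerset.filter Finset.Nonempty = ∅ := by
      simp [Finset.powerset_empty, Finset.filter_singleton]
    have h2 : ({a} : Finset (Fin m)).powerset.filter Finset.Nonempty = {{a}} := by
      rw [hps]
      ext I
      simp only [mem_filter, mem_insert, mem_singleton]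
      constructor
      · rintro ⟨h | h, hne⟩
        · exact absurd h (by rintro rfl; exact hne.ne_empty rfl)
        · exact h
      · rintro rfl; exact ⟨Or.inr rfl, Finset.singleton_nonempty a⟩
    rw [h1, Finset.sum_singleton, h2, Finset.sum_singleton]
    simp only [Finset.sum_empty, add_zero, Finset.card_empty, Finset.card_singleton,
      Nat.sub_zero, Nat.sub_self, pow_one, pow_zero, one_mul]
    have := Real.rpow_le_rpow hc
      (le_add_of_nonneg_right (hx {a} (Finset.singleton_nonempty a))) hr0
    linarith
  -- main case: 1 ≤ r
  have hr0 : (0 : ℝ) ≤ r := le_trans zero_le_one hr1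
  have hgd : ∀ (J : Finset (Fin m)) (l : ℝ), HasDerivAt
      (fun t => c + ∑ I ∈ J.powerset.filter Finset.Nonempty, (if a ∈ I then t else 1) * x I)
      (∑ I ∈ J.powerset.filter Finset.Nonempty, (if a ∈ I then x I else 0)) l := by
    intro J l
    refine HasDerivAt.const_add c ?_
    refine HasDerivAt.fun_sum fun I _ => ?_
    by_cases hI : a ∈ I
    · simpa [hI] using (hasDerivAt_id l).mul_const (x I)
    · simpa [hI] using hasDerivAt_const l ((1 : ℝ) * x I)
  have hFd : ∀ l : ℝ, HasDerivAt
      (fun t => ∑ J ∈ S.powerset, (-1 : ℝ) ^ (n - J.card) *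
        (c + ∑ I ∈ J.powerset.filter Finset.Nonempty, (if a ∈ I then t else 1) * x I) ^ r)
      (∑ J ∈ S.powerset, (-1 : ℝ) ^ (n - J.card) *
        ((∑ I ∈ J.powerset.filter Finset.Nonempty, (if a ∈ I then x I else 0)) * r *
          (c + ∑ I ∈ J.powerset.filter Finset.Nonempty,
            (if a ∈ I then l else 1) * x I) ^ (r - 1))) l := by
    intro l
    refine HasDerivAt.fun_sum fun J _ => ?_
    exact HasDerivAt.const_mul _ ((hgd J l).rpow_const (Or.inr hr1))
  have hD : ∀ l : ℝ, 0 ≤ l → 0 ≤ ∑ J ∈ S.powerset, (-1 : ℝ) ^ (n - J.card) *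
      ((∑ I ∈ J.powerset.filter Finset.Nonempty, (if a ∈ I then x I else 0)) * r *
        (c + ∑ I ∈ J.powerset.filter Finset.Nonempty,
          (if a ∈ I then l else 1) * x I) ^ (r - 1)) := by
    intro l hl
    have hw : ∀ I : Finset (Fin m), I.Nonempty → 0 ≤ (if a ∈ I then l else 1) * x I := by
      intro I hI
      have h0 : (0 : ℝ) ≤ (if a ∈ I then l else 1) := by
        split_ifs with h
        · exact hl
        · exact zero_le_one
      exact mul_nonneg h0 (hx I hI)
    -- inner positivity via the induction hypothesis
    have inner : ∀ U : Finset (Fin m), a ∈ U → U ⊆ S →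
        0 ≤ ∑ J ∈ S.powerset.filter (fun J => U ⊆ J), (-1 : ℝ) ^ (n - J.card) *
          (c + ∑ I ∈ J.powerset.filter Finset.Nonempty,
            (if a ∈ I then l else 1) * x I) ^ (r - 1) := by
      intro U haU hUS
      have hUcard : 1 ≤ U.card := Finset.card_pos.mpr ⟨a, haU⟩
      have hUScard : U.card ≤ n := hS ▸ Finset.card_le_card hUS
      have hc' : 0 ≤ c + ∑ I ∈ U.powerset.filter Finset.Nonempty,
          (if a ∈ I then l else 1) * x I :=
        add_nonneg hc (Finset.sum_nonneg fun I hI => hw I (Finset.mem_filter.mp hI).2)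
      have hx' : ∀ I : Finset (Fin m), I.Nonempty →
          0 ≤ ∑ V ∈ U.powerset, (if a ∈ V ∪ I then l else 1) * x (V ∪ I) := by
        intro I hI
        exact Finset.sum_nonneg fun V _ => hw _ (hI.mono Finset.subset_union_right)
      have hT : (S \ U).card < n := by
        have hss : S \ U ⊂ S := Finset.sdiff_ssubset hUS ⟨a, haU⟩
        exact hS ▸ Finset.card_lt_card hss
      have hcardSU : (S \ U).card = n - U.card := by rw [Finset.card_sdiff_of_subset hUS, hS]
      have hr' : (((S \ U).card : ℕ) : ℝ) - 1 ≤ r - 1 := by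
        have h1 : (S \ U).card + 1 ≤ n := by omega
        have h2 : (((S \ U).card : ℕ) : ℝ) + 1 ≤ (n : ℝ) := by exact_mod_cast h1
        linarith
      have hIH := IH (S \ U).card hT (S \ U) rfl _ hc'
        (fun I => ∑ V ∈ U.powerset, (if a ∈ V ∪ I then l else 1) * x (V ∪ I)) hx' (r - 1) hr'
      refine le_of_le_of_eq hIH ?_
      refine Finset.sum_nbij' (fun J' => U ∪ J') (fun J => J \ U) ?_ ?_ ?_ ?_ ?_
      · intro J' hJ'
        rw [Finset.mem_powerset] at hJ'
        exact Finset.mem_filter.mpr ⟨Finset.mem_powerset.mpr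
          (Finset.union_subset hUS (hJ'.trans Finset.sdiff_subset)), Finset.subset_union_left⟩
      · intro J hJ
        obtain ⟨hJS, _⟩ := Finset.mem_filter.mp hJ
        exact Finset.mem_powerset.mpr
          (Finset.sdiff_subset_sdiff (Finset.mem_powerset.mp hJS) Finset.Subset.rfl)
      · intro J' hJ'
        rw [Finset.mem_powerset] at hJ'
        exact Finset.union_sdiff_cancel_left (Finset.disjoint_sdiff.mono_right hJ')
      · intro J hJ
        exact Finset.union_sdiff_of_subset (Finset.mem_filter.mp hJ).2
      · intro J' hJ'
        rw [Finset.mem_powerset] at hJ'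
        have hd : Disjoint U J' := Finset.disjoint_sdiff.mono_right hJ'
        have hcardJ : (U ∪ J').card = U.card + J'.card := Finset.card_union_of_disjoint hd
        have hval : c + ∑ I ∈ (U ∪ J').powerset.filter Finset.Nonempty,
            (if a ∈ I then l else 1) * x I
            = (c + ∑ I ∈ U.powerset.filter Finset.Nonempty, (if a ∈ I then l else 1) * x I)
              + ∑ I ∈ J'.powerset.filter Finset.Nonempty,
                  ∑ V ∈ U.powerset, (if a ∈ V ∪ I then l else 1) * x (V ∪ I) := by
          rw [split_lemma U J' hd (fun I => (if a ∈ I then l else 1) * x I)]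
          ring
        rw [← hval, hcardSU, hcardJ, Nat.sub_sub]
    -- the sum rearrangement
    have step1 : ∀ J ∈ S.powerset,
        (-1 : ℝ) ^ (n - J.card) *
          ((∑ I ∈ J.powerset.filter Finset.Nonempty, (if a ∈ I then x I else 0)) * r *
            (c + ∑ I ∈ J.powerset.filter Finset.Nonempty,
              (if a ∈ I then l else 1) * x I) ^ (r - 1))
        = ∑ I ∈ S.powerset, (if a ∈ I ∧ I ⊆ J then
            x I * (r * ((-1 : ℝ) ^ (n - J.card) *
              (c + ∑ I' ∈ J.powerset.filter Finset.Nonempty,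
                (if a ∈ I' then l else 1) * x I') ^ (r - 1))) else 0) := by
      intro J hJ
      rw [Finset.mem_powerset] at hJ
      have e2 : (J.powerset.filter Finset.Nonempty).filter (fun I => a ∈ I)
          = S.powerset.filter (fun I => a ∈ I ∧ I ⊆ J) := by
        ext I
        simp only [Finset.mem_filter, Finset.mem_powerset]
        exact ⟨fun ⟨⟨h1, _⟩, h3⟩ => ⟨h1.trans hJ, h3, h1⟩, fun ⟨_, h3, h1⟩ => ⟨⟨h1, ⟨a, h3⟩⟩, h3⟩⟩
      set q : ℝ := r * ((-1 : ℝ) ^ (n - J.card) *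
        (c + ∑ I' ∈ J.powerset.filter Finset.Nonempty,
          (if a ∈ I' then l else 1) * x I') ^ (r - 1)) with hqdef
      have e3 : ∀ s : Finset (Finset (Fin m)),
          (∑ I ∈ s, if a ∈ I then x I else 0) * q
            = ∑ I ∈ s.filter (fun I => a ∈ I), x I * q := by
        intro s
        rw [Finset.sum_filter, Finset.sum_mul]
        exact Finset.sum_congr rfl fun I _ => by rw [ite_mul, zero_mul]
      calc (-1 : ℝ) ^ (n - J.card) *
          ((∑ I ∈ J.powerset.filter Finset.Nonempty, (if a ∈ I then x I else 0)) * r *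
            (c + ∑ I ∈ J.powerset.filter Finset.Nonempty,
              (if a ∈ I then l else 1) * x I) ^ (r - 1))
          = (∑ I ∈ J.powerset.filter Finset.Nonempty, if a ∈ I then x I else 0) * q := by
            rw [hqdef]; ring
        _ = ∑ I ∈ (J.powerset.filter Finset.Nonempty).filter (fun I => a ∈ I), x I * q :=
            e3 _
        _ = ∑ I ∈ S.powerset.filter (fun I => a ∈ I ∧ I ⊆ J), x I * q := by rw [e2]
        _ = _ := Finset.sum_filter _ _
    rw [Finset.sum_congr rfl step1, Finset.sum_comm]
    refine Finset.sum_nonneg fun I hI => ?_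
    by_cases haI : a ∈ I
    · have hIS : I ⊆ S := Finset.mem_powerset.mp hI
      have h3 : ∑ J ∈ S.powerset, (if a ∈ I ∧ I ⊆ J then
            x I * (r * ((-1 : ℝ) ^ (n - J.card) *
              (c + ∑ I' ∈ J.powerset.filter Finset.Nonempty,
                (if a ∈ I' then l else 1) * x I') ^ (r - 1))) else 0)
          = x I * (r * ∑ J ∈ S.powerset.filter (fun J => I ⊆ J),
              (-1 : ℝ) ^ (n - J.card) *
                (c + ∑ I' ∈ J.powerset.filter Finset.Nonempty,
                  (if a ∈ I' then l else 1) * x I') ^ (r - 1)) := by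
        simp only [haI, true_and]
        rw [← Finset.sum_filter, ← Finset.mul_sum, ← Finset.mul_sum]
      rw [h3]
      exact mul_nonneg (hx I ⟨a, haI⟩) (mul_nonneg hr0 (inner I haI hIS))
    · simp [haI]
  -- value at 0 vanishes
  have hF0 : ∑ J ∈ S.powerset, (-1 : ℝ) ^ (n - J.card) *
      (c + ∑ I ∈ J.powerset.filter Finset.Nonempty,
        (if a ∈ I then (0 : ℝ) else 1) * x I) ^ r = 0 := by
    have hna : a ∉ S.erase a := Finset.notMem_erase a S
    have hcardSe : (S.erase a).card = n - 1 := by rw [Finset.card_erase_of_mem haS, hS]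
    conv_lhs => rw [show S = insert a (S.erase a) from (Finset.insert_erase haS).symm]
    rw [Finset.sum_powerset_insert hna, ← Finset.sum_add_distrib]
    apply Finset.sum_eq_zero
    intro J hJ
    rw [Finset.mem_powerset] at hJ
    have haJ : a ∉ J := fun h => hna (hJ h)
    have hcardJ : (insert a J).card = J.card + 1 := Finset.card_insert_of_notMem haJ
    have hJle : J.card ≤ n - 1 := hcardSe ▸ Finset.card_le_card hJ
    have hsum : ∑ I ∈ (insert a J).powerset.filter Finset.Nonempty,
          (if a ∈ I then (0 : ℝ) else 1) * x I
        = ∑ I ∈ J.powerset.filter Finset.Nonempty, (if a ∈ I then (0 : ℝ) else 1) * x I := by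
      symm
      apply Finset.sum_subset
        (Finset.filter_subset_filter _ (Finset.powerset_mono.mpr (Finset.subset_insert a J)))
      intro I hI hnI
      have hIi : I ⊆ insert a J := Finset.mem_powerset.mp (Finset.mem_filter.mp hI).1
      have hne : I.Nonempty := (Finset.mem_filter.mp hI).2
      have haI : a ∈ I := by
        by_contra haI
        have hIJ : I ⊆ J := by
          intro b hb
          rcases Finset.mem_insert.mp (hIi hb) with rfl | h
          · exact absurd hb haI
          · exact h
        exact hnI (Finset.mem_filter.mpr ⟨Finset.mem_powerset.mpr hIJ, hne⟩)
      simp [haI]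
    have hsign : (-1 : ℝ) ^ (n - (insert a J).card) = -(-1 : ℝ) ^ (n - J.card) := by
      rw [hcardJ]
      have he : n - J.card = (n - (J.card + 1)) + 1 := by omega
      rw [he, pow_succ]
      ring
    rw [hsum, hsign]
    ring
  -- monotonicity on [0,1]
  have hdiff : Differentiable ℝ (fun t => ∑ J ∈ S.powerset, (-1 : ℝ) ^ (n - J.card) *
      (c + ∑ I ∈ J.powerset.filter Finset.Nonempty, (if a ∈ I then t else 1) * x I) ^ r) :=
    fun t => (hFd t).differentiableAt
  have hmono := monotoneOn_of_deriv_nonneg (convex_Icc (0 : ℝ) 1)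
    hdiff.continuous.continuousOn
    (fun t _ => (hdiff t).differentiableWithinAt)
    (fun t ht => by
      rw [(hFd t).deriv]
      rw [interior_Icc] at ht
      exact hD t ht.1.le)
  have h01 := hmono (Set.mem_Icc.mpr ⟨le_refl 0, zero_le_one⟩)
    (Set.mem_Icc.mpr ⟨zero_le_one, le_refl 1⟩) zero_le_one
  have hle : ∑ J ∈ S.powerset, (-1 : ℝ) ^ (n - J.card) *
        (c + ∑ I ∈ J.powerset.filter Finset.Nonempty,
          (if a ∈ I then (0 : ℝ) else 1) * x I) ^ r
      ≤ ∑ J ∈ S.powerset, (-1 : ℝ) ^ (n - J.card) *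
        (c + ∑ I ∈ J.powerset.filter Finset.Nonempty,
          (if a ∈ I then (1 : ℝ) else 1) * x I) ^ r := h01
  rw [hF0] at hle
  have heq : ∑ J ∈ S.powerset, (-1 : ℝ) ^ (n - J.card) *
        (c + ∑ I ∈ J.powerset.filter Finset.Nonempty,
          (if a ∈ I then (1 : ℝ) else 1) * x I) ^ r
      = ∑ J ∈ S.powerset, (-1 : ℝ) ^ (n - J.card) *
        (c + ∑ I ∈ J.powerset.filter Finset.Nonempty, x I) ^ r := by
    refine Finset.sum_congr rfl fun J _ => ?_
    rw [Finset.sum_congr rfl fun I _ => by rw [ite_self, one_mul]]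
  rw [heq] at hle
  exact hle

theorem stmt_10 {m : ℕ} (x : Finset (Fin m) → ℝ)
    (hx : ∀ J : Finset (Fin m), J.Nonempty → 0 ≤ x J) (r : ℝ) (hr : (m : ℝ) - 1 ≤ r)
    (s : Finset (Fin m) → ℝ)
    (hs : ∀ J : Finset (Fin m), s J = ∑ I ∈ J.powerset.filter Finset.Nonempty, x I) :
    0 ≤ ∑ j ∈ Finset.Icc 1 m, (-1 : ℝ) ^ (m - j) *
      ∑ J ∈ Finset.univ.filter (fun J : Finset (Fin m) => J.card = j), s J ^ r := by
  rcases Nat.eq_zero_or_pos m with hm0 | hm1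
  · subst hm0; simp
  have hcardu : (Finset.univ : Finset (Fin m)).card = m := by
    rw [Finset.card_univ, Fintype.card_fin]
  have key0 := key m (Finset.univ : Finset (Fin m)) hcardu 0 le_rfl x hx r hr
  rw [sum_powerset_eq_empty_add] at key0
  have hempty : (-1 : ℝ) ^ (m - (∅ : Finset (Fin m)).card) *
      ((0 : ℝ) + ∑ I ∈ (∅ : Finset (Fin m)).powerset.filter Finset.Nonempty, x I) ^ r ≤ 0 := by
    have h0 : (∅ : Finset (Fin m)).powerset.filter Finset.Nonempty = ∅ := by
      simp [Finset.powerset_empty, Finset.filter_singleton]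
    rw [h0]
    simp only [Finset.sum_empty, add_zero, Finset.card_empty, Nat.sub_zero]
    rcases Nat.even_or_odd m with he | ho
    · have hm2 : 2 ≤ m := by obtain ⟨k, hk⟩ := he; omega
      have hrpos : (0 : ℝ) < r := by
        have h2m : (2 : ℝ) ≤ (m : ℝ) := by exact_mod_cast hm2
        linarith
      rw [Real.zero_rpow (ne_of_gt hrpos)]
      simp
    · rw [Odd.neg_one_pow ho]
      have := Real.rpow_nonneg (le_refl (0 : ℝ)) r
      linarith
  have h2 : 0 ≤ ∑ J ∈ (Finset.univ : Finset (Fin m)).powerset.filter Finset.Nonempty,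
      (-1 : ℝ) ^ (m - J.card) *
        ((0 : ℝ) + ∑ I ∈ J.powerset.filter Finset.Nonempty, x I) ^ r := by linarith
  have hmaps : ∀ J ∈ (Finset.univ : Finset (Fin m)).powerset.filter Finset.Nonempty,
      J.card ∈ Finset.Icc 1 m := by
    intro J hJ
    have hne : J.Nonempty := (Finset.mem_filter.mp hJ).2
    refine Finset.mem_Icc.mpr ⟨Finset.card_pos.mpr hne, ?_⟩
    have := Finset.card_le_univ J
    simpa [Fintype.card_fin] using this
  have hfib := Finset.sum_fiberwise_of_maps_to hmaps
    (fun J => (-1 : ℝ) ^ (m - J.card) *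
      ((0 : ℝ) + ∑ I ∈ J.powerset.filter Finset.Nonempty, x I) ^ r)
  rw [← hfib] at h2
  refine le_trans h2 (le_of_eq ?_)
  refine Finset.sum_congr rfl fun j hj => ?_
  have hj1 : 1 ≤ j := (Finset.mem_Icc.mp hj).1
  have hsets : ((Finset.univ : Finset (Fin m)).powerset.filter Finset.Nonempty).filter
        (fun J => J.card = j)
      = Finset.univ.filter (fun J : Finset (Fin m) => J.card = j) := by
    ext J
    simp only [Finset.mem_filter, Finset.mem_powerset, Finset.mem_univ, true_and]
    constructor
    · rintro ⟨⟨_, _⟩, h⟩; exact h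
    · intro h
      exact ⟨⟨Finset.subset_univ J, Finset.card_pos.mp (by omega)⟩, h⟩
  rw [hsets, Finset.mul_sum]
  refine Finset.sum_congr rfl fun J hJ => ?_
  have hcard : J.card = j := (Finset.mem_filter.mp hJ).2
  rw [zero_add, ← hs J, hcard]
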